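/- Let H > h/2 > 0, C > 0, ρ ≠ 0, z ∈ ℝ, and let 𝒦 be the integral operator on L²(ℝ) with kernel 𝕂(y,y') = Cρ²·K_H(z-(y+y')/2)·K_h(y'-y), with K_α(x) = (1/(√(2π)α))exp(-x²/(2α²)). Then for each n ≥ 0 there exists a monic polynomial p_n of degree n such that V_n(y) = exp(-(y-z)²/(2Hh))·p_n((y-z)/√(Hh)) satisfies 𝒦 V_n = Λ_n V_n with Λ_n = (Cρ²/(√(2π)(H+h/2)))·((H-h/2)/(H+h/2))^n. -/

import Mathlib

open MeasureTheory Real Polynomial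

noncomputable def K (α x : ℝ) : ℝ :=
  (1 / (Real.sqrt (2 * π) * α)) * Real.exp (-x ^ 2 / (2 * α ^ 2))

open Filter Topology

noncomputable def P : ℕ → Polynomial ℝ
  | 0 => 1
  | 1 => X
  | (n+2) => X * P (n+1) - Polynomial.C (((n:ℝ)+1)/2) * P n
lemma P_succ_succ (n : ℕ) : P (n+2) = X * P (n+1) - Polynomial.C (((n:ℝ)+1)/2) * P n := rfl

lemma P_monic_deg : ∀ n : ℕ, (P n).Monic ∧ (P n).natDegree = n
  | 0 => by simp [P, monic_one]
  | 1 => by simp [P, monic_X]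
  | (n+2) => by
    obtain ⟨hm1, hd1⟩ := P_monic_deg (n+1)
    obtain ⟨hm0, hd0⟩ := P_monic_deg n
    have hmul : (X * P (n+1)).Monic := monic_X.mul hm1
    have hdmul : (X * P (n+1)).natDegree = n + 2 := by
      rw [natDegree_mul X_ne_zero hm1.ne_zero, natDegree_X, hd1]; omega
    have hle : (Polynomial.C (((n:ℝ)+1)/2) * P n).natDegree ≤ n :=
      le_trans (natDegree_C_mul_le _ _) (le_of_eq hd0)
    have hlt : (Polynomial.C (((n:ℝ)+1)/2) * P n).natDegree < (X * P (n+1)).natDegree := by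
      omega
    constructor
    · exact hmul.sub_of_left (degree_lt_degree hlt)
    · rw [P_succ_succ, natDegree_sub_eq_left_of_natDegree_lt hlt, hdmul]

lemma P_deriv : ∀ n : ℕ, derivative (P (n+1)) = Polynomial.C ((n:ℝ)+1) * P n
  | 0 => by simp [P]
  | 1 => by
    rw [show (1:ℕ)+1 = 0+2 from rfl, P_succ_succ]
    apply Polynomial.funext; intro x
    simp [P]
    ring
  | (n+2) => by
    have h1 := P_deriv (n+1)
    have h0 := P_deriv n
    rw [show n+2+1 = (n+1)+2 from rfl, P_succ_succ]
    rw [derivative_sub, derivative_mul, derivative_mul, derivative_X, derivative_C, h1, h0]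
    rw [P_succ_succ]
    apply Polynomial.funext; intro x
    simp only [eval_add, eval_sub, eval_mul, eval_C, eval_X, eval_zero, zero_mul, one_mul, eval_one]
    push_cast
    ring

variable {b : ℝ}

lemma integrable_pow_gauss (hb : 0 < b) (k : ℕ) :
    Integrable fun u : ℝ => u ^ k * Real.exp (-b * u ^ 2) := by
  have h : (-1 : ℝ) < (k : ℝ) := lt_of_lt_of_le (by norm_num) (Nat.cast_nonneg k)
  simpa [Real.rpow_natCast] using integrable_rpow_mul_exp_neg_mul_sq hb h

lemma gauss_poly_eq (q : Polynomial ℝ) : (fun u : ℝ => Real.exp (-b * u ^ 2) * q.eval u)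
    = fun u => ∑ k ∈ Finset.range (q.natDegree + 1),
        q.coeff k * (u ^ k * Real.exp (-b * u ^ 2)) := by
  funext u
  rw [eval_eq_sum_range, Finset.mul_sum]
  exact Finset.sum_congr rfl fun k _ => by ring

lemma integrable_gauss_poly (hb : 0 < b) (q : Polynomial ℝ) :
    Integrable fun u : ℝ => Real.exp (-b * u ^ 2) * q.eval u := by
  rw [gauss_poly_eq]
  exact integrable_finset_sum _ fun k _ => (integrable_pow_gauss hb k).const_mul _

lemma integrable_gauss_poly' (hb : 0 < b) (a : ℝ) (q : Polynomial ℝ) :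
    Integrable fun w : ℝ => Real.exp (-b * (w - a) ^ 2) * q.eval w := by
  have h := (integrable_gauss_poly hb (q.comp (Polynomial.X + Polynomial.C a))).comp_sub_right a
  simpa [eval_comp] using h

lemma tendsto_gauss_poly_atTop (hb : 0 < b) (q : Polynomial ℝ) :
    Tendsto (fun u : ℝ => Real.exp (-b * u ^ 2) * q.eval u) atTop (𝓝 0) := by
  have hmono : ∀ k : ℕ, Tendsto (fun u : ℝ => u ^ k * Real.exp (-b * u ^ 2)) atTop (𝓝 0) := by
    intro k
    have h1 := rpow_mul_exp_neg_mul_sq_isLittleO_exp_neg hb (k : ℝ)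
    have h2 : Tendsto (fun x : ℝ => Real.exp (-(1/2) * x)) atTop (𝓝 0) := by
      have : Tendsto (fun x : ℝ => (1/2) * x) atTop atTop :=
        Tendsto.const_mul_atTop (by norm_num) tendsto_id
      simpa [Function.comp_def, neg_mul] using Real.tendsto_exp_neg_atTop_nhds_zero.comp this
    have h3 := h1.tendsto_zero_of_tendsto h2
    simpa [Real.rpow_natCast] using h3
  rw [gauss_poly_eq]
  have := tendsto_finset_sum (Finset.range (q.natDegree + 1))
    (fun k _ => ((hmono k).const_mul (q.coeff k)))
  simpa using this

lemma tendsto_gauss_poly_atBot (hb : 0 < b) (q : Polynomial ℝ) :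
    Tendsto (fun u : ℝ => Real.exp (-b * u ^ 2) * q.eval u) atBot (𝓝 0) := by
  have h := (tendsto_gauss_poly_atTop hb (q.comp (-Polynomial.X))).comp tendsto_neg_atBot_atTop
  simpa [Function.comp_def, eval_comp] using h

lemma integral_gauss_deriv (hb : 0 < b) (q : Polynomial ℝ) :
    ∫ u : ℝ, Real.exp (-b * u ^ 2) * (derivative q).eval u
      = ∫ u : ℝ, (2 * b * u) * (Real.exp (-b * u ^ 2) * q.eval u) := by
  set F : ℝ → ℝ := fun u => -(Real.exp (-b * u ^ 2) * q.eval u) with hF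
  set G : ℝ → ℝ := fun u => (2 * b * u) * (Real.exp (-b * u ^ 2) * q.eval u)
      - Real.exp (-b * u ^ 2) * (derivative q).eval u with hGdef
  have i1 : Integrable fun u : ℝ => (2 * b * u) * (Real.exp (-b * u ^ 2) * q.eval u) := by
    have h := integrable_gauss_poly hb (Polynomial.C (2*b) * Polynomial.X * q)
    have he : (fun u : ℝ => Real.exp (-b * u ^ 2) * (Polynomial.C (2*b) * Polynomial.X * q).eval u)
        = fun u : ℝ => (2 * b * u) * (Real.exp (-b * u ^ 2) * q.eval u) := by
      funext u; simp; ring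
    rwa [he] at h
  have i2 := integrable_gauss_poly hb (derivative q)
  have hGint : Integrable G := i1.sub i2
  have hG : ∀ u : ℝ, HasDerivAt F (G u) u := by
    intro u
    have h1 : HasDerivAt (fun u : ℝ => Real.exp (-b * u ^ 2)) ((-b * (2 * u)) * Real.exp (-b * u ^ 2)) u := by
      have h0 : HasDerivAt (fun u : ℝ => -b * u ^ 2) (-b * (2 * u)) u := by
        simpa using (hasDerivAt_pow 2 u).const_mul (-b)
      simpa [mul_comm] using h0.exp
    have h2 : HasDerivAt (fun u : ℝ => q.eval u) ((derivative q).eval u) u := q.hasDerivAt u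
    have h3 : HasDerivAt (fun u : ℝ => -(Real.exp (-b * u ^ 2) * q.eval u)) _ u := (h1.mul h2).neg
    convert h3 using 1
    show 2 * b * u * (Real.exp (-b * u ^ 2) * q.eval u) - Real.exp (-b * u ^ 2) * (derivative q).eval u = _
    ring
  have htop : Tendsto F atTop (𝓝 0) := by
    simpa [hF] using (tendsto_gauss_poly_atTop hb q).neg
  have hbot : Tendsto F atBot (𝓝 0) := by
    simpa [hF] using (tendsto_gauss_poly_atBot hb q).neg
  have hIoi : ∫ u in Set.Ioi (0:ℝ), G u = 0 - F 0 :=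
    integral_Ioi_of_hasDerivAt_of_tendsto' (fun x _ => hG x) hGint.integrableOn htop
  have hIic : ∫ u in Set.Iic (0:ℝ), G u = F 0 - 0 :=
    integral_Iic_of_hasDerivAt_of_tendsto' (fun x _ => hG x) hGint.integrableOn hbot
  have h0 : ∫ u : ℝ, G u = 0 := by
    rw [← intervalIntegral.integral_Iic_add_Ioi hGint.integrableOn hGint.integrableOn, hIoi, hIic]; ring
  have hsub : ∫ u : ℝ, G u
      = (∫ u : ℝ, (2 * b * u) * (Real.exp (-b * u ^ 2) * q.eval u))
        - ∫ u : ℝ, Real.exp (-b * u ^ 2) * (derivative q).eval u := integral_sub i1 i2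
  rw [h0] at hsub
  linarith

lemma gauss_shift (hb : 0 < b) (a : ℝ) (r : Polynomial ℝ) :
    (∫ w : ℝ, Real.exp (-b * (w - a) ^ 2) * r.eval w)
      = ∫ u : ℝ, Real.exp (-b * u ^ 2) * (r.comp (Polynomial.X + Polynomial.C a)).eval u := by
  rw [← integral_add_right_eq_self (fun w => Real.exp (-b * (w - a) ^ 2) * r.eval w) a]
  congr 1
  funext u
  simp [eval_comp]

lemma gauss_step (hb : 0 < b) (a : ℝ) (q : Polynomial ℝ) :
    ∫ w : ℝ, Real.exp (-b * (w - a) ^ 2) * (Polynomial.X * q).eval w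
      = a * (∫ w : ℝ, Real.exp (-b * (w - a) ^ 2) * q.eval w)
        + (1 / (2 * b)) * ∫ w : ℝ, Real.exp (-b * (w - a) ^ 2) * (derivative q).eval w := by
  rw [gauss_shift hb, gauss_shift hb, gauss_shift hb]
  set qc := q.comp (Polynomial.X + Polynomial.C a) with hqc
  have hder : (derivative q).comp (Polynomial.X + Polynomial.C a) = derivative qc := by
    rw [hqc, derivative_comp]
    simp
  rw [hder]
  have hXcomp : ((Polynomial.X * q).comp (Polynomial.X + Polynomial.C a))
      = (Polynomial.X + Polynomial.C a) * qc := by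
    simp [mul_comp, hqc]
  rw [hXcomp]
  have hsplit : (fun u : ℝ => Real.exp (-b * u ^ 2) * (((Polynomial.X + Polynomial.C a) * qc).eval u))
      = fun u : ℝ => (1 / (2 * b)) * ((2 * b * u) * (Real.exp (-b * u ^ 2) * qc.eval u))
          + a * (Real.exp (-b * u ^ 2) * qc.eval u) := by
    funext u
    have h2b : (2 : ℝ) * b ≠ 0 := by positivity
    field_simp
    simp only [mul_add, add_mul, eval_add, eval_mul, eval_X, eval_C]
    ring
  rw [hsplit]
  have i1 : Integrable fun u : ℝ => (2 * b * u) * (Real.exp (-b * u ^ 2) * qc.eval u) := by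
    have h := integrable_gauss_poly hb (Polynomial.C (2 * b) * Polynomial.X * qc)
    have he : (fun u : ℝ => Real.exp (-b * u ^ 2) * (Polynomial.C (2 * b) * Polynomial.X * qc).eval u)
        = fun u : ℝ => (2 * b * u) * (Real.exp (-b * u ^ 2) * qc.eval u) := by
      funext u; simp; ring
    rwa [he] at h
  have i2 := integrable_gauss_poly hb qc
  rw [integral_add ((i1.const_mul _)) (i2.const_mul _), integral_const_mul, integral_const_mul,
    ← integral_gauss_deriv hb qc]
  ring

lemma gauss_int_const (hb : 0 < b) (a : ℝ) :
    ∫ w : ℝ, Real.exp (-b * (w - a) ^ 2) = Real.sqrt (π / b) := by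
  have h := integral_add_right_eq_self (μ := volume) (fun x : ℝ => Real.exp (-b * x ^ 2)) (-a)
  simp only [← sub_eq_add_neg] at h
  rw [h, integral_gaussian]

lemma key_lemma {c : ℝ} (hc0 : 0 < c) (hc1 : c < 1) :
    ∀ n : ℕ, ∀ y : ℝ,
      ∫ w : ℝ, Real.exp (-(1 / (1 - c ^ 2)) * (w - c * y) ^ 2) * (P n).eval w
        = Real.sqrt (π * (1 - c ^ 2)) * c ^ n * (P n).eval y := by
  have hs : 0 < 1 - c ^ 2 := by nlinarith
  have hb : 0 < 1 / (1 - c ^ 2) := by positivity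
  have hK : Real.sqrt (π / (1 / (1 - c ^ 2))) = Real.sqrt (π * (1 - c ^ 2)) := by
    congr 1
    field_simp
  intro n
  induction n using Nat.twoStepInduction with
  | zero =>
    intro y
    have h0 : P 0 = 1 := rfl
    simp only [h0, eval_one, mul_one, pow_zero]
    rw [gauss_int_const hb, hK]
  | one =>
    intro y
    have hP1 : P 1 = Polynomial.X * 1 := by simp [P]
    rw [hP1, gauss_step hb]
    simp only [derivative_one, eval_zero, mul_zero, integral_zero, eval_one, mul_one]
    rw [gauss_int_const hb, hK]
    simp only [eval_X]
    ring
  | more n ih0 ih1 =>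
    intro y
    rw [P_succ_succ]
    have e : (fun w : ℝ => Real.exp (-(1 / (1 - c ^ 2)) * (w - c * y) ^ 2)
          * ((Polynomial.X * P (n+1) - Polynomial.C (((n:ℝ)+1)/2) * P n).eval w))
        = fun w : ℝ => Real.exp (-(1 / (1 - c ^ 2)) * (w - c * y) ^ 2) * ((Polynomial.X * P (n+1)).eval w)
            - (((n:ℝ)+1)/2) * (Real.exp (-(1 / (1 - c ^ 2)) * (w - c * y) ^ 2) * ((P n).eval w)) := by
      funext w
      simp only [eval_sub, eval_mul, eval_C]
      ring
    have i1 : Integrable fun w : ℝ => Real.exp (-(1 / (1 - c ^ 2)) * (w - c * y) ^ 2)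
        * ((Polynomial.X * P (n+1)).eval w) := integrable_gauss_poly' hb _ _
    have i2 : Integrable fun w : ℝ => Real.exp (-(1 / (1 - c ^ 2)) * (w - c * y) ^ 2)
        * ((P n).eval w) := integrable_gauss_poly' hb _ _
    rw [e, integral_sub i1 (i2.const_mul _), integral_const_mul, gauss_step hb, P_deriv n]
    have e2 : (fun w : ℝ => Real.exp (-(1 / (1 - c ^ 2)) * (w - c * y) ^ 2)
          * ((Polynomial.C ((n:ℝ)+1) * P n).eval w))
        = fun w : ℝ => ((n:ℝ)+1) * (Real.exp (-(1 / (1 - c ^ 2)) * (w - c * y) ^ 2) * ((P n).eval w)) := by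
      funext w
      simp only [eval_mul, eval_C]
      ring
    rw [e2, integral_const_mul, ih1 y, ih0 y]
    simp only [eval_sub, eval_mul, eval_C, eval_X]
    have hne : (1 : ℝ) - c ^ 2 ≠ 0 := ne_of_gt hs
    field_simp
    ring

theorem single_reflector_spectrum (H h C ρ z : ℝ) (hh : 0 < h) (hH : h / 2 < H)
    (hC : 0 < C) (hρ : ρ ≠ 0) (n : ℕ) :
    ∃ p : Polynomial ℝ, p.Monic ∧ p.natDegree = n ∧
      ∀ y : ℝ,
        (∫ y' : ℝ,
            C * ρ ^ 2 * K H (z - (y + y') / 2) * K h (y' - y) *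
              (Real.exp (-(y' - z) ^ 2 / (2 * H * h)) *
                p.eval ((y' - z) / Real.sqrt (H * h)))) =
          ((C * ρ ^ 2 / (Real.sqrt (2 * π) * (H + h / 2))) *
              ((H - h / 2) / (H + h / 2)) ^ n) *
            (Real.exp (-(y - z) ^ 2 / (2 * H * h)) *
              p.eval ((y - z) / Real.sqrt (H * h))) := by
  have hH0 : 0 < H := lt_trans (by linarith) hH
  have hHh : 0 < H * h := mul_pos hH0 hh
  set t := Real.sqrt (H * h) with htdef
  have ht0 : 0 < t := Real.sqrt_pos.mpr hHh
  have ht2 : t ^ 2 = H * h := Real.sq_sqrt hHh.le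
  set c : ℝ := (2 * H - h) / (2 * H + h) with hcdef
  have hden : 0 < 2 * H + h := by linarith
  have hc0 : 0 < c := div_pos (by linarith) hden
  have hc1 : c < 1 := by rw [hcdef, div_lt_one hden]; linarith
  have hs : 0 < 1 - c ^ 2 := by nlinarith
  have hc2 : 1 - c ^ 2 = 8 * (H * h) / (2 * H + h) ^ 2 := by
    rw [hcdef]; field_simp; ring
  set u := Real.sqrt (2 * π) with hudef
  have hu2 : u ^ 2 = 2 * π := Real.sq_sqrt (by positivity)
  have hu0 : 0 < u := Real.sqrt_pos.mpr (by positivity)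
  obtain ⟨hmon, hdeg⟩ := P_monic_deg n
  refine ⟨P n, hmon, hdeg, fun y => ?_⟩
  set A : ℝ := C * ρ ^ 2 / (2 * π * (H * h)) * Real.exp (-(y - z) ^ 2 / (2 * H * h)) with hA
  have hpoint : ∀ y' : ℝ,
      C * ρ ^ 2 * K H (z - (y + y') / 2) * K h (y' - y) *
        (Real.exp (-(y' - z) ^ 2 / (2 * H * h)) * (P n).eval ((y' - z) / t))
      = A * (Real.exp (-(1 / (1 - c ^ 2)) * ((y' - z) / t - c * ((y - z) / t)) ^ 2)
          * (P n).eval ((y' - z) / t)) := by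
    intro y'
    have hexp : Real.exp (-(z - (y + y') / 2) ^ 2 / (2 * H ^ 2))
          * Real.exp (-(y' - y) ^ 2 / (2 * h ^ 2))
          * Real.exp (-(y' - z) ^ 2 / (2 * H * h))
        = Real.exp (-(y - z) ^ 2 / (2 * H * h))
          * Real.exp (-(1 / (1 - c ^ 2)) * ((y' - z) / t - c * ((y - z) / t)) ^ 2) := by
      rw [← Real.exp_add, ← Real.exp_add, ← Real.exp_add]
      congr 1
      have e1 : (y' - z) / t - c * ((y - z) / t) = ((y' - z) - c * (y - z)) / t := by ring
      rw [e1, hc2]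
      rw [div_pow (y' - z - c * (y - z)) t 2, ht2, hcdef]
      field_simp [hH0.ne', hh.ne', hden.ne']
      try ring
    rw [K, K, hA]
    have hcst : (1 / (u * H)) * (1 / (u * h)) = 1 / (2 * π * (H * h)) := by
      rw [← hu2]; field_simp
    calc C * ρ ^ 2 * ((1 / (u * H)) * Real.exp (-(z - (y + y') / 2) ^ 2 / (2 * H ^ 2)))
          * ((1 / (u * h)) * Real.exp (-(y' - y) ^ 2 / (2 * h ^ 2)))
          * (Real.exp (-(y' - z) ^ 2 / (2 * H * h)) * (P n).eval ((y' - z) / t))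
        = C * ρ ^ 2 * ((1 / (u * H)) * (1 / (u * h)))
          * ((Real.exp (-(z - (y + y') / 2) ^ 2 / (2 * H ^ 2))
              * Real.exp (-(y' - y) ^ 2 / (2 * h ^ 2))
              * Real.exp (-(y' - z) ^ 2 / (2 * H * h))) * (P n).eval ((y' - z) / t)) := by
          ring
      _ = _ := by
          rw [hcst, hexp]
          ring
  rw [show (fun y' : ℝ => C * ρ ^ 2 * K H (z - (y + y') / 2) * K h (y' - y) *
        (Real.exp (-(y' - z) ^ 2 / (2 * H * h)) * (P n).eval ((y' - z) / t)))
      = fun y' : ℝ => A * (Real.exp (-(1 / (1 - c ^ 2)) * ((y' - z) / t - c * ((y - z) / t)) ^ 2)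
          * (P n).eval ((y' - z) / t)) from funext hpoint]
  rw [integral_const_mul]
  have hchg : (∫ y' : ℝ, Real.exp (-(1 / (1 - c ^ 2)) * ((y' - z) / t - c * ((y - z) / t)) ^ 2)
        * (P n).eval ((y' - z) / t))
      = t * ∫ w : ℝ, Real.exp (-(1 / (1 - c ^ 2)) * (w - c * ((y - z) / t)) ^ 2) * (P n).eval w := by
    set F : ℝ → ℝ := fun w => Real.exp (-(1 / (1 - c ^ 2)) * (w - c * ((y - z) / t)) ^ 2)
        * (P n).eval w with hF
    have h1 : (∫ y' : ℝ, F ((y' - z) / t)) = ∫ x : ℝ, F (x / t) := by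
      have h2 := integral_add_right_eq_self (μ := volume) (fun x : ℝ => F (x / t)) (-z)
      simp only [sub_eq_add_neg]
      exact h2
    have h3 : (∫ y' : ℝ, Real.exp (-(1 / (1 - c ^ 2)) * ((y' - z) / t - c * ((y - z) / t)) ^ 2)
        * (P n).eval ((y' - z) / t)) = ∫ y' : ℝ, F ((y' - z) / t) := by
      congr 1
    rw [h3, h1, MeasureTheory.Measure.integral_comp_div F t, abs_of_pos ht0, smul_eq_mul]
  rw [hchg, key_lemma hc0 hc1 n ((y - z) / t)]
  have hsqrt : Real.sqrt (π * (1 - c ^ 2)) = 2 * u * t / (2 * H + h) := by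
    have hq : π * (1 - c ^ 2) = (2 * u * t / (2 * H + h)) ^ 2 := by
      rw [hc2, div_pow, show (2 * u * t) ^ 2 = 4 * u ^ 2 * t ^ 2 from by ring, hu2, ht2,
        mul_div_assoc']
      congr 1
      ring
    rw [hq, Real.sqrt_sq (by positivity)]
  have hcn : c ^ n = ((H - h / 2) / (H + h / 2)) ^ n := by
    congr 1
    rw [hcdef, div_eq_div_iff hden.ne' (by linarith)]
    ring
  rw [hsqrt, hcn, hA]
  rw [← hu2, ← ht2]
  field_simp
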